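/- (Analytic form of Theorem 3.6.) Let Φ be a subcritical branching mechanism (α > 0) whose Lévy measure π has unbounded support, i.e. π((r,∞)) > 0 for every r > 0. For r > 0 let (Φ^{(r,∞)})^{−1}(a) denote the unique b ≥ 0 with Φ^{(r,∞)}(b) = a (note Φ^{(r,∞)} is a strictly increasing bijection of [0,∞) onto [0,∞) since its drift α + ∫_{(r,∞)} θ π(dθ) is positive). Then for every x > 0, lim_{r→∞} (1 − exp(−x · (Φ^{(r,∞)})^{−1}(π((r,∞))))) / π((r,∞)) = x/α. Equivalently, lim_{r→∞} (Φ^{(r,∞)})^{−1}(π((r,∞)))/π((r,∞)) = 1/α. -/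

import Mathlib

open MeasureTheory Filter Set

/-- The branching mechanism `Φ(λ) = αλ + βλ² + ∫_{(0,∞)} (e^{-λθ} - 1 + λθ) π(dθ)`. -/
noncomputable def Phi (α β : ℝ) (π : Measure ℝ) (lam : ℝ) : ℝ :=
  α * lam + β * lam ^ 2 + ∫ θ, (Real.exp (-lam * θ) - 1 + lam * θ) ∂π

/-- The `(r,∞)`-truncated branching mechanism
`Φ^{(r,∞)}(λ) = Φ(λ) + ∫_{(r,∞)} (1 - e^{-λθ}) π(dθ)`. -/
noncomputable def PhiIoi (α β : ℝ) (π : Measure ℝ) (r lam : ℝ) : ℝ :=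
  Phi α β π lam + ∫ θ in Set.Ioi r, (1 - Real.exp (-lam * θ)) ∂π


lemma exp_aux_nonneg (u : ℝ) : 0 ≤ Real.exp (-u) - 1 + u := by
  nlinarith [Real.add_one_le_exp (-u)]

lemma exp_aux_le (u : ℝ) (hu : 0 ≤ u) : Real.exp (-u) - 1 + u ≤ u := by
  nlinarith [Real.exp_le_one_iff.2 (neg_nonpos.2 hu)]

lemma exp_aux_sq (u : ℝ) (hu : 0 ≤ u) : Real.exp (-u) - 1 + u ≤ u ^ 2 / 2 := by
  have h1 : 1 + u + u ^ 2 / 2 ≤ Real.exp u := by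
    have h := Real.sum_le_exp_of_nonneg hu 3
    simp [Finset.sum_range_succ] at h
    nlinarith [h]
  have h2 : Real.exp (-u) * Real.exp u = 1 := by
    rw [← Real.exp_add]; simp
  have h3 := Real.exp_pos u
  nlinarith [sq_nonneg (u - 1), sq_nonneg u, sq_nonneg (u * u)]

lemma F_mono {a b θ : ℝ} (ha : 0 ≤ a) (hab : a ≤ b) (hθ : 0 ≤ θ) :
    Real.exp (-a * θ) - 1 + a * θ ≤ Real.exp (-b * θ) - 1 + b * θ := by
  have h1 : Real.exp (-b * θ) = Real.exp (-a * θ) * Real.exp (-((b - a) * θ)) := by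
    rw [← Real.exp_add]; ring_nf
  have h2 : 1 - (b - a) * θ ≤ Real.exp (-((b - a) * θ)) := by
    nlinarith [Real.add_one_le_exp (-((b - a) * θ))]
  have h3 : Real.exp (-a * θ) ≤ 1 := Real.exp_le_one_iff.2 (by nlinarith)
  have h4 := Real.exp_pos (-a * θ)
  have h5 : 0 ≤ (b - a) * θ := mul_nonneg (by linarith) hθ
  nlinarith [mul_le_mul_of_nonneg_left h2 h4.le]

lemma slope_lim : Tendsto (fun u : ℝ => (1 - Real.exp (-u)) / u) (nhdsWithin 0 {(0:ℝ)}ᶜ) (nhds 1) := by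
  have hd : HasDerivAt (fun u : ℝ => -Real.exp (-u)) 1 0 := by
    have h : HasDerivAt (fun u : ℝ => -Real.exp (-u)) (-(Real.exp (-0) * -1)) 0 :=
      ((hasDerivAt_neg (x := (0:ℝ))).exp).neg
    simpa using h
  have := hasDerivAt_iff_tendsto_slope.mp hd
  refine this.congr fun u => ?_
  rw [slope_def_field]
  simp
  ring

variable {π : Measure ℝ}

lemma ae_pos (hsupp : π (Set.Iic 0) = 0) : ∀ᵐ θ ∂π, 0 < θ := by
  rw [ae_iff]
  convert hsupp using 2
  ext θ; simp [not_lt]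

lemma int_dom (hsupp : π (Set.Iic 0) = 0)
    (hint : Integrable (fun θ => min θ (θ ^ 2)) π)
    {f : ℝ → ℝ} (hf : AEStronglyMeasurable f π) (c : ℝ)
    (h : ∀ θ : ℝ, 0 < θ → |f θ| ≤ c * min θ (θ ^ 2)) : Integrable f π :=
  (hint.const_mul c).mono' hf (((ae_pos hsupp).mono) fun θ hθ => by
    simpa [Real.norm_eq_abs] using h θ hθ)

lemma intF (hsupp : π (Set.Iic 0) = 0)
    (hint : Integrable (fun θ => min θ (θ ^ 2)) π)
    {lam : ℝ} (hlam : 0 ≤ lam) :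
    Integrable (fun θ => Real.exp (-lam * θ) - 1 + lam * θ) π := by
  refine int_dom hsupp hint ?_ (max lam (lam ^ 2 / 2)) ?_
  · exact (((Real.continuous_exp.comp (continuous_const.mul continuous_id)).sub
      continuous_const).add (continuous_const.mul continuous_id)).aestronglyMeasurable
  · intro θ hθ
    have h0 := exp_aux_nonneg (lam * θ)
    have hu : 0 ≤ lam * θ := mul_nonneg hlam hθ.le
    rw [abs_of_nonneg (by rw [neg_mul]; linarith)]
    rcases le_total θ 1 with h1 | h1
    · have := exp_aux_sq (lam * θ) hu
      have hmin : min θ (θ ^ 2) = θ ^ 2 := min_eq_right (by nlinarith)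
      rw [hmin, neg_mul]
      calc Real.exp (-(lam * θ)) - 1 + lam * θ ≤ (lam * θ) ^ 2 / 2 := this
        _ = lam ^ 2 / 2 * θ ^ 2 := by ring
        _ ≤ max lam (lam ^ 2 / 2) * θ ^ 2 :=
            mul_le_mul_of_nonneg_right (le_max_right _ _) (sq_nonneg θ)
    · have := exp_aux_le (lam * θ) hu
      have hmin : min θ (θ ^ 2) = θ := min_eq_left (by nlinarith)
      rw [hmin, neg_mul]
      calc Real.exp (-(lam * θ)) - 1 + lam * θ ≤ lam * θ := this
        _ ≤ max lam (lam ^ 2 / 2) * θ :=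
            mul_le_mul_of_nonneg_right (le_max_left _ _) hθ.le

lemma int_min (hsupp : π (Set.Iic 0) = 0)
    (hint : Integrable (fun θ => min θ (θ ^ 2)) π)
    {b : ℝ} (hb : 0 ≤ b) :
    Integrable (fun θ => min θ (b * θ ^ 2 / 2)) π := by
  refine int_dom hsupp hint ?_ (max 1 (b / 2)) ?_
  · exact (continuous_id.min ((continuous_const.mul (continuous_pow 2)).div_const 2)).aestronglyMeasurable
  · intro θ hθ
    have hn : 0 ≤ min θ (b * θ ^ 2 / 2) := le_min hθ.le (by positivity)
    rw [abs_of_nonneg hn]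
    rcases le_total θ 1 with h1 | h1
    · have hmin : min θ (θ ^ 2) = θ ^ 2 := min_eq_right (by nlinarith)
      rw [hmin]
      calc min θ (b * θ ^ 2 / 2) ≤ b * θ ^ 2 / 2 := min_le_right _ _
        _ = b / 2 * θ ^ 2 := by ring
        _ ≤ max 1 (b / 2) * θ ^ 2 := mul_le_mul_of_nonneg_right (le_max_right _ _) (sq_nonneg θ)
    · have hmin : min θ (θ ^ 2) = θ := min_eq_left (by nlinarith)
      rw [hmin]
      calc min θ (b * θ ^ 2 / 2) ≤ θ := min_le_left _ _
        _ ≤ max 1 (b / 2) * θ := by nlinarith [le_max_left (1:ℝ) (b/2)]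

lemma tail_fin (hint : Integrable (fun θ => min θ (θ ^ 2)) π)
    {r : ℝ} (hr : 0 < r) : π (Set.Ioi r) < ⊤ := by
  refine lt_of_le_of_lt (measure_mono ?_) (hint.measure_ge_lt_top (ε := min r (r ^ 2)) (by positivity))
  intro θ (hθ : r < θ)
  have h1 : r ≤ θ := hθ.le
  have : min r (r ^ 2) ≤ min θ (θ ^ 2) := by
    apply min_le_min h1; nlinarith
  exact this

lemma intTail {lam r : ℝ} (hint : Integrable (fun θ => min θ (θ ^ 2)) π)
    (hr : 0 < r) (hlam : 0 ≤ lam) :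
    IntegrableOn (fun θ => 1 - Real.exp (-lam * θ)) (Set.Ioi r) π := by
  have hfin := tail_fin hint hr
  refine Integrable.mono' (g := fun _ => (1:ℝ))
    (integrableOn_const hfin.ne) ?_ ?_
  · exact (continuous_const.sub (Real.continuous_exp.comp
      (continuous_const.mul continuous_id))).aestronglyMeasurable
  · filter_upwards [ae_restrict_mem measurableSet_Ioi] with θ hθ
    have hθ0 : (0:ℝ) < θ := hr.trans hθ
    have h1 : Real.exp (-lam * θ) ≤ 1 := Real.exp_le_one_iff.2 (by nlinarith)
    have h2 := Real.exp_pos (-lam * θ)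
    rw [Real.norm_eq_abs, abs_of_nonneg (by linarith)]
    linarith

/-- Analytic form of Theorem 3.6: in the subcritical case the tail of the
global maximal jump is asymptotically `(x/α) π((r,∞))` as `r → ∞`. -/
theorem global_maximal_jump_tail_asymptotics
    (α β : ℝ) (hα : 0 < α) (hβ : 0 ≤ β) (π : Measure ℝ)
    (hsupp : π (Set.Iic 0) = 0) (hσ : SigmaFinite π)
    (hint : Integrable (fun θ => min θ (θ ^ 2)) π)
    (hunbdd : ∀ r : ℝ, 0 < r → 0 < (π (Set.Ioi r)).toReal)
    (inv : ℝ → ℝ → ℝ)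
    (hinv : ∀ r : ℝ, 0 < r → ∀ a : ℝ, 0 ≤ a →
      0 ≤ inv r a ∧ PhiIoi α β π r (inv r a) = a) :
    (∀ r : ℝ, 0 < r → StrictMonoOn (PhiIoi α β π r) (Set.Ici 0)) ∧
    (∀ x : ℝ, 0 < x →
      Tendsto
        (fun r => (1 - Real.exp (-x * inv r ((π (Set.Ioi r)).toReal))) /
          (π (Set.Ioi r)).toReal)
        atTop (nhds (x / α))) ∧
    Tendsto
      (fun r => inv r ((π (Set.Ioi r)).toReal) / (π (Set.Ioi r)).toReal)
      atTop (nhds (1 / α)) := by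
  have aepos := ae_pos hsupp
  have hFnn : ∀ lam : ℝ, 0 ≤ ∫ θ, (Real.exp (-lam * θ) - 1 + lam * θ) ∂π := fun lam =>
    integral_nonneg fun θ => by rw [neg_mul]; exact exp_aux_nonneg (lam * θ)
  have hTnn : ∀ r lam : ℝ, 0 < r → 0 ≤ lam →
      0 ≤ ∫ θ in Set.Ioi r, (1 - Real.exp (-lam * θ)) ∂π := by
    intro r lam hr hlam
    refine integral_nonneg_of_ae ?_
    filter_upwards [ae_restrict_mem measurableSet_Ioi] with θ hθ
    have hθ0 : (0:ℝ) < θ := hr.trans hθ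
    have : Real.exp (-lam * θ) ≤ 1 := Real.exp_le_one_iff.2 (by nlinarith)
    simp only [Pi.zero_apply]
    linarith
  -- strict monotonicity
  have hmono : ∀ r : ℝ, 0 < r → StrictMonoOn (PhiIoi α β π r) (Set.Ici 0) := by
    intro r hr a ha c hc hac
    simp only [Set.mem_Ici] at ha hc
    have h1 : α * a < α * c := by nlinarith
    have h2 : β * a ^ 2 ≤ β * c ^ 2 :=
      mul_le_mul_of_nonneg_left (pow_le_pow_left₀ ha hac.le 2) hβ
    have h3 : ∫ θ, (Real.exp (-a * θ) - 1 + a * θ) ∂π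
        ≤ ∫ θ, (Real.exp (-c * θ) - 1 + c * θ) ∂π := by
      refine integral_mono_ae (intF hsupp hint ha) (intF hsupp hint hc) ?_
      filter_upwards [aepos] with θ hθ
      exact F_mono ha hac.le hθ.le
    have h4 : ∫ θ in Set.Ioi r, (1 - Real.exp (-a * θ)) ∂π
        ≤ ∫ θ in Set.Ioi r, (1 - Real.exp (-c * θ)) ∂π := by
      refine integral_mono_ae (intTail hint hr ha) (intTail hint hr hc) ?_
      filter_upwards [ae_restrict_mem measurableSet_Ioi] with θ hθ
      have hθ0 : (0:ℝ) < θ := hr.trans hθ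
      have : Real.exp (-c * θ) ≤ Real.exp (-a * θ) := Real.exp_le_exp.2 (by nlinarith)
      linarith
    simp only [PhiIoi, Phi]
    linarith
  -- lower bound α·λ ≤ PhiIoi r λ
  have hlow : ∀ r lam : ℝ, 0 < r → 0 ≤ lam → α * lam ≤ PhiIoi α β π r lam := by
    intro r lam hr hlam
    have h1 := hFnn lam
    have h2 := hTnn r lam hr hlam
    have h3 : 0 ≤ β * lam ^ 2 := mul_nonneg hβ (sq_nonneg lam)
    simp only [PhiIoi, Phi]
    linarith
  have hB := fun (r : ℝ) (hr : 0 < r) =>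
    hinv r hr ((π (Set.Ioi r)).toReal) ENNReal.toReal_nonneg
  have hab : ∀ r : ℝ, 0 < r →
      α * inv r ((π (Set.Ioi r)).toReal) ≤ (π (Set.Ioi r)).toReal := by
    intro r hr
    calc α * inv r ((π (Set.Ioi r)).toReal)
        ≤ PhiIoi α β π r (inv r ((π (Set.Ioi r)).toReal)) := hlow r _ hr (hB r hr).1
      _ = (π (Set.Ioi r)).toReal := (hB r hr).2
  -- p r → 0
  have hM : ∀ r : ℝ, 1 ≤ r →
      (π (Set.Ioi r)).toReal ≤ (∫ θ, min θ (θ ^ 2) ∂π) / r := by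
    intro r hr
    have hr0 : (0:ℝ) < r := lt_of_lt_of_le one_pos hr
    have hfin := tail_fin hint hr0
    have h1 : r * (π (Set.Ioi r)).toReal ≤ ∫ θ in Set.Ioi r, min θ (θ ^ 2) ∂π := by
      refine setIntegral_ge_of_const_le_real measurableSet_Ioi hfin.ne ?_ hint.integrableOn
      intro θ hθ
      have hrθ : r < θ := hθ
      exact le_min hrθ.le (by nlinarith)
    have h2 : ∫ θ in Set.Ioi r, min θ (θ ^ 2) ∂π ≤ ∫ θ, min θ (θ ^ 2) ∂π := by
      refine setIntegral_le_integral hint ?_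
      filter_upwards [aepos] with θ hθ
      exact le_min hθ.le (sq_nonneg θ)
    rw [le_div_iff₀ hr0]
    nlinarith
  have hp0 : Tendsto (fun r => (π (Set.Ioi r)).toReal) atTop (nhds 0) := by
    refine tendsto_of_tendsto_of_tendsto_of_le_of_le' tendsto_const_nhds
      (Tendsto.div_atTop (tendsto_const_nhds (x := ∫ θ, min θ (θ ^ 2) ∂π)) tendsto_id) ?_ ?_
    · exact Eventually.of_forall fun r => ENNReal.toReal_nonneg
    · filter_upwards [eventually_ge_atTop 1] with r hr using hM r hr
  have hble : ∀ r : ℝ, 0 < r →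
      inv r ((π (Set.Ioi r)).toReal) ≤ (π (Set.Ioi r)).toReal / α := by
    intro r hr
    rw [le_div_iff₀ hα]
    nlinarith [hab r hr]
  have hb0 : Tendsto (fun r => inv r ((π (Set.Ioi r)).toReal)) atTop (nhds 0) := by
    have hdiv : Tendsto (fun r => (π (Set.Ioi r)).toReal / α) atTop (nhds 0) := by
      simpa using hp0.div_const α
    refine tendsto_of_tendsto_of_tendsto_of_le_of_le' tendsto_const_nhds hdiv ?_ ?_
    · filter_upwards [eventually_gt_atTop 0] with r hr using (hB r hr).1
    · filter_upwards [eventually_gt_atTop 0] with r hr using hble r hr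
  have hPhi0 : ∀ r : ℝ, PhiIoi α β π r 0 = 0 := by
    intro r; simp [PhiIoi, Phi]
  have hbpos : ∀ r : ℝ, 0 < r → 0 < inv r ((π (Set.Ioi r)).toReal) := by
    intro r hr
    rcases lt_or_eq_of_le (hB r hr).1 with h | h
    · exact h
    · exfalso
      have h2 := (hB r hr).2
      rw [← h, hPhi0 r] at h2
      exact (hunbdd r hr).ne h2
  -- tail integral of min → 0
  have hmeas : StronglyMeasurable (fun θ : ℝ => min θ (θ ^ 2)) :=
    (continuous_id.min (continuous_pow 2)).stronglyMeasurable
  have hG : Tendsto (fun r : ℝ => ∫ θ in Set.Ioi r, min θ (θ ^ 2) ∂π) atTop (nhds 0) := by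
    have h := tendsto_integral_filter_of_dominated_convergence (μ := π) (l := (atTop : Filter ℝ))
      (F := fun (r : ℝ) θ => (Set.Ioi r).indicator (fun θ => min θ (θ ^ 2)) θ)
      (f := fun _ => (0:ℝ)) (fun θ => |min θ (θ ^ 2)|)
      (Eventually.of_forall fun r => (hmeas.indicator measurableSet_Ioi).aestronglyMeasurable)
      (Eventually.of_forall fun r => Eventually.of_forall fun θ => by
        rw [Real.norm_eq_abs]
        by_cases hmem : θ ∈ Set.Ioi r
        · simp [hmem]
        · simp [hmem, abs_nonneg])
      hint.abs
      (Eventually.of_forall fun θ => by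
        have hev : ∀ᶠ r in (atTop : Filter ℝ),
            (Set.Ioi r).indicator (fun θ => min θ (θ ^ 2)) θ = 0 := by
          filter_upwards [eventually_ge_atTop θ] with r hr
          simp [Set.indicator_of_notMem, Set.mem_Ioi, not_lt.2 hr]
        exact Tendsto.congr' (EventuallyEq.symm hev) tendsto_const_nhds)
    simp only [integral_indicator measurableSet_Ioi, integral_zero] at h
    exact h
  -- J(b) → 0 along b → 0 in [0,1]
  have hJ : Tendsto (fun b : ℝ => ∫ θ, min θ (b * θ ^ 2 / 2) ∂π)
      (nhdsWithin 0 (Set.Icc 0 1)) (nhds 0) := by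
    have h := tendsto_integral_filter_of_dominated_convergence (μ := π)
      (l := nhdsWithin (0:ℝ) (Set.Icc 0 1))
      (F := fun (b : ℝ) θ => min θ (b * θ ^ 2 / 2)) (f := fun _ => (0:ℝ))
      (fun θ => min θ (θ ^ 2))
      (Eventually.of_forall fun b =>
        (continuous_id.min ((continuous_const.mul (continuous_pow 2)).div_const 2)).aestronglyMeasurable)
      (by
        filter_upwards [self_mem_nhdsWithin] with b hb
        filter_upwards [aepos] with θ hθ
        obtain ⟨hb0, hb1⟩ := hb
        have hn : 0 ≤ min θ (b * θ ^ 2 / 2) := le_min hθ.le (by positivity)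
        rw [Real.norm_eq_abs, abs_of_nonneg hn]
        exact min_le_min le_rfl (by nlinarith))
      hint
      (by
        filter_upwards [aepos] with θ hθ
        have hc : Tendsto (fun b : ℝ => min θ (b * θ ^ 2 / 2)) (nhds 0)
            (nhds (min θ (0 * θ ^ 2 / 2))) :=
          (continuous_const.min ((continuous_id.mul continuous_const).div_const 2)).tendsto 0
        have : min θ (0 * θ ^ 2 / 2) = 0 := by
          rw [zero_mul, zero_div]; exact min_eq_right hθ.le
        rw [this] at hc
        exact hc.mono_left nhdsWithin_le_nhds)
    simpa using h
  have hJb : Tendsto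
      (fun r => ∫ θ, min θ (inv r ((π (Set.Ioi r)).toReal) * θ ^ 2 / 2) ∂π)
      atTop (nhds 0) := by
    have hcomp : Tendsto (fun r => inv r ((π (Set.Ioi r)).toReal)) atTop
        (nhdsWithin 0 (Set.Icc 0 1)) := by
      rw [tendsto_nhdsWithin_iff]
      refine ⟨hb0, ?_⟩
      filter_upwards [eventually_gt_atTop 0, hb0.eventually (eventually_le_nhds one_pos)]
        with r hr hle
      exact ⟨(hB r hr).1, hle⟩
    exact hJ.comp hcomp
  -- key upper bound on p r
  have hup : ∀ r : ℝ, 1 ≤ r →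
      (π (Set.Ioi r)).toReal ≤
        α * inv r ((π (Set.Ioi r)).toReal)
        + β * inv r ((π (Set.Ioi r)).toReal) ^ 2
        + inv r ((π (Set.Ioi r)).toReal)
            * ∫ θ, min θ (inv r ((π (Set.Ioi r)).toReal) * θ ^ 2 / 2) ∂π
        + inv r ((π (Set.Ioi r)).toReal) * ∫ θ in Set.Ioi r, min θ (θ ^ 2) ∂π := by
    intro r hr
    have hr0 : (0:ℝ) < r := lt_of_lt_of_le one_pos hr
    set b := inv r ((π (Set.Ioi r)).toReal) with hbdef
    have hb : 0 ≤ b := (hB r hr0).1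
    have hEq := (hB r hr0).2
    have hI1 : ∫ θ, (Real.exp (-b * θ) - 1 + b * θ) ∂π
        ≤ b * ∫ θ, min θ (b * θ ^ 2 / 2) ∂π := by
      rw [← integral_const_mul]
      refine integral_mono_ae (intF hsupp hint hb) ((int_min hsupp hint hb).const_mul b) ?_
      filter_upwards [aepos] with θ hθ
      have hu : 0 ≤ b * θ := mul_nonneg hb hθ.le
      rcases le_total θ (b * θ ^ 2 / 2) with h | h
      · rw [min_eq_left h, neg_mul]
        exact exp_aux_le (b * θ) hu
      · rw [min_eq_right h, neg_mul]
        calc Real.exp (-(b * θ)) - 1 + b * θ ≤ (b * θ) ^ 2 / 2 := exp_aux_sq (b * θ) hu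
          _ = b * (b * θ ^ 2 / 2) := by ring
    have hI2 : ∫ θ in Set.Ioi r, (1 - Real.exp (-b * θ)) ∂π
        ≤ b * ∫ θ in Set.Ioi r, min θ (θ ^ 2) ∂π := by
      rw [← integral_const_mul]
      refine integral_mono_ae (intTail hint hr0 hb) (hint.integrableOn.const_mul b) ?_
      filter_upwards [ae_restrict_mem measurableSet_Ioi] with θ hθ
      have h1 : (1:ℝ) ≤ θ := hr.trans (le_of_lt hθ)
      have hmin : min θ (θ ^ 2) = θ := min_eq_left (by nlinarith)
      rw [hmin, neg_mul]
      have h2 := exp_aux_nonneg (b * θ)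
      linarith
    calc (π (Set.Ioi r)).toReal = PhiIoi α β π r b := hEq.symm
      _ = α * b + β * b ^ 2 + (∫ θ, (Real.exp (-b * θ) - 1 + b * θ) ∂π)
          + ∫ θ in Set.Ioi r, (1 - Real.exp (-b * θ)) ∂π := rfl
      _ ≤ _ := by linarith
  -- squeeze: α * (b/p) → 1
  have key : Tendsto
      (fun r => α * (inv r ((π (Set.Ioi r)).toReal) / (π (Set.Ioi r)).toReal))
      atTop (nhds 1) := by
    have hCten : Tendsto (fun r =>
        β * inv r ((π (Set.Ioi r)).toReal)
        + (∫ θ, min θ (inv r ((π (Set.Ioi r)).toReal) * θ ^ 2 / 2) ∂π)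
        + ∫ θ in Set.Ioi r, min θ (θ ^ 2) ∂π) atTop (nhds 0) := by
      have := ((hb0.const_mul β).add hJb).add hG
      simpa using this
    have hCfin : Tendsto (fun r => 1 -
        (β * inv r ((π (Set.Ioi r)).toReal)
        + (∫ θ, min θ (inv r ((π (Set.Ioi r)).toReal) * θ ^ 2 / 2) ∂π)
        + ∫ θ in Set.Ioi r, min θ (θ ^ 2) ∂π) / α) atTop (nhds 1) := by
      have h2 := hCten.div_const α
      have h3 := (tendsto_const_nhds (x := (1:ℝ)) (f := (atTop : Filter ℝ))).sub h2
      simpa using h3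
    refine tendsto_of_tendsto_of_tendsto_of_le_of_le' hCfin tendsto_const_nhds ?_ ?_
    · -- lower bound
      filter_upwards [eventually_ge_atTop 1] with r hr
      have hr0 : (0:ℝ) < r := lt_of_lt_of_le one_pos hr
      have hupr := hup r hr
      have habr := hab r hr0
      have hbnn := (hB r hr0).1
      have hp := hunbdd r hr0
      have hJnn : 0 ≤ ∫ θ, min θ (inv r ((π (Set.Ioi r)).toReal) * θ ^ 2 / 2) ∂π := by
        refine integral_nonneg_of_ae ?_
        filter_upwards [aepos] with θ hθ
        simp only [Pi.zero_apply]
        exact le_min hθ.le (by positivity)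
      have hGnn : 0 ≤ ∫ θ in Set.Ioi r, min θ (θ ^ 2) ∂π := by
        refine integral_nonneg_of_ae ?_
        filter_upwards [ae_restrict_mem measurableSet_Ioi] with θ hθ
        have hθ0 : (0:ℝ) < θ := hr0.trans hθ
        simp only [Pi.zero_apply]
        exact le_min hθ0.le (sq_nonneg θ)
      revert hupr habr hbnn hp hJnn hGnn
      generalize inv r ((π (Set.Ioi r)).toReal) = b
      generalize (π (Set.Ioi r)).toReal = p
      generalize (∫ θ, min θ (b * θ ^ 2 / 2) ∂π) = J
      generalize (∫ θ in Set.Ioi r, min θ (θ ^ 2) ∂π) = G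
      intro hupr habr hbnn hp hJnn hGnn
      rw [mul_div_assoc', le_div_iff₀ hp, sub_mul, one_mul]
      have hC : 0 ≤ β * b + J + G := by nlinarith
      have hXY : (β * b + J + G) / α * (α * b) ≤ (β * b + J + G) / α * p :=
        mul_le_mul_of_nonneg_left habr (div_nonneg hC hα.le)
      have hY : (β * b + J + G) / α * (α * b) = β * b ^ 2 + b * J + b * G := by
        field_simp
      linarith
    · -- upper bound
      filter_upwards [eventually_gt_atTop 0] with r hr
      have hp := hunbdd r hr
      rw [mul_div_assoc']
      exact (div_le_one hp).2 (hab r hr)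
  have hbp : Tendsto
      (fun r => inv r ((π (Set.Ioi r)).toReal) / (π (Set.Ioi r)).toReal)
      atTop (nhds (1 / α)) := by
    have h2 : Tendsto (fun r => 1 / α *
        (α * (inv r ((π (Set.Ioi r)).toReal) / (π (Set.Ioi r)).toReal)))
        atTop (nhds (1 / α)) := by
      simpa using key.const_mul (1 / α)
    refine h2.congr fun r => ?_
    field_simp
  refine ⟨hmono, ?_, hbp⟩
  intro x hx
  have hxb : Tendsto (fun r => x * inv r ((π (Set.Ioi r)).toReal)) atTop
      (nhdsWithin 0 {(0:ℝ)}ᶜ) := by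
    rw [tendsto_nhdsWithin_iff]
    constructor
    · simpa using hb0.const_mul x
    · filter_upwards [eventually_gt_atTop 0] with r hr
      exact (mul_pos hx (hbpos r hr)).ne'
  have h1 : Tendsto (fun r =>
      (1 - Real.exp (-(x * inv r ((π (Set.Ioi r)).toReal))))
        / (x * inv r ((π (Set.Ioi r)).toReal))) atTop (nhds 1) := slope_lim.comp hxb
  have h2 := h1.mul (hbp.const_mul x)
  rw [show (1:ℝ) * (x * (1 / α)) = x / α by ring] at h2
  refine h2.congr' ?_
  filter_upwards [eventually_gt_atTop 0] with r hr
  have hb := hbpos r hr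
  have hp := hunbdd r hr
  have hxbne : x * inv r ((π (Set.Ioi r)).toReal) ≠ 0 := (mul_pos hx hb).ne'
  rw [neg_mul x]
  field_simp
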